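/- arXiv:1603.04125 — 3 statements merged into one kernel-verified Lean document; each statement's English description precedes it below -/
import Mathlib

section
/- Under the hypotheses of the previous differential inequality, V(t) ≤ V(0) + Σ_{i=1}^N ν_i/(ρ - σ_i) + Nγ/ρ for all t ≥ 0, and limsup_{t→∞} V(t) ≤ Nγ/ρ. -/
open Filter

theorem stmt3 {N : ℕ} (hN : 0 < N)
    (V V' : ℝ → ℝ) (ρ γ : ℝ) (ν σ : Fin N → ℝ)
    (hρ : 0 < ρ) (hγ : 0 < γ)
    (hν : ∀ i, 0 < ν i) (hσ : ∀ i, 0 < σ i ∧ σ i < ρ)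
    (hdiff : ∀ t, 0 ≤ t → HasDerivAt V (V' t) t)
    (hnonneg : ∀ t, 0 ≤ t → 0 ≤ V t)
    (hineq : ∀ t, 0 ≤ t →
      V' t ≤ -ρ * V t + (∑ i, ν i * Real.exp (-(σ i) * t)) + N * γ) :
    (∀ t, 0 ≤ t → V t ≤ V 0 + (∑ i, ν i / (ρ - σ i)) + N * γ / ρ) ∧
      Filter.limsup V Filter.atTop ≤ N * γ / ρ := by
  have hρσ : ∀ i, 0 < ρ - σ i := fun i => sub_pos.2 (hσ i).2
  -- F is the integrated upper bound for e^{ρt} V(t)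
  set F : ℝ → ℝ := fun t => V 0 + (∑ i, ν i / (ρ - σ i) * (Real.exp ((ρ - σ i) * t) - 1))
      + N * γ / ρ * (Real.exp (ρ * t) - 1) with hFdef
  set B : ℝ → ℝ := fun t => V 0 * Real.exp (-(ρ * t))
      + (∑ i, ν i / (ρ - σ i) * Real.exp (-(σ i) * t)) + N * γ / ρ with hBdef
  set h : ℝ → ℝ := fun t => F t - Real.exp (ρ * t) * V t with hhdef
  -- derivative of F
  have hFd : ∀ t : ℝ, HasDerivAt F
      ((∑ i, ν i * Real.exp ((ρ - σ i) * t)) + N * γ * Real.exp (ρ * t)) t := by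
    intro t
    have h1 : ∀ i : Fin N, HasDerivAt (fun t => ν i / (ρ - σ i) * (Real.exp ((ρ - σ i) * t) - 1))
        (ν i * Real.exp ((ρ - σ i) * t)) t := by
      intro i
      have he : HasDerivAt (fun t : ℝ => Real.exp ((ρ - σ i) * t))
          (Real.exp ((ρ - σ i) * t) * ((ρ - σ i) * 1)) t :=
        ((hasDerivAt_id t).const_mul (ρ - σ i)).exp
      have := ((he.sub_const 1).const_mul (ν i / (ρ - σ i)))
      refine this.congr_deriv ?_
      field_simp [(hρσ i).ne']
    have hsum : HasDerivAt (fun t => ∑ i, ν i / (ρ - σ i) * (Real.exp ((ρ - σ i) * t) - 1))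
        (∑ i, ν i * Real.exp ((ρ - σ i) * t)) t := HasDerivAt.fun_sum fun i _ => h1 i
    have he2 : HasDerivAt (fun t : ℝ => Real.exp (ρ * t)) (Real.exp (ρ * t) * (ρ * 1)) t :=
      ((hasDerivAt_id t).const_mul ρ).exp
    have h2 : HasDerivAt (fun t => (N : ℝ) * γ / ρ * (Real.exp (ρ * t) - 1))
        ((N : ℝ) * γ * Real.exp (ρ * t)) t := by
      have := (he2.sub_const 1).const_mul ((N : ℝ) * γ / ρ)
      refine this.congr_deriv ?_
      field_simp
    have := ((hsum.const_add (V 0)).add h2)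
    exact this
  -- derivative of e^{ρt} V t for t ≥ 0
  have hWd : ∀ t : ℝ, 0 ≤ t → HasDerivAt (fun t => Real.exp (ρ * t) * V t)
      (Real.exp (ρ * t) * (ρ * V t + V' t)) t := by
    intro t ht
    have he2 : HasDerivAt (fun t : ℝ => Real.exp (ρ * t)) (Real.exp (ρ * t) * (ρ * 1)) t :=
      ((hasDerivAt_id t).const_mul ρ).exp
    have := he2.mul (hdiff t ht)
    refine this.congr_deriv ?_
    ring
  -- h' nonneg on t ≥ 0
  have hhd : ∀ t : ℝ, 0 ≤ t → HasDerivAt h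
      (((∑ i, ν i * Real.exp ((ρ - σ i) * t)) + N * γ * Real.exp (ρ * t))
        - Real.exp (ρ * t) * (ρ * V t + V' t)) t :=
    fun t ht => (hFd t).sub (hWd t ht)
  have hh0 : ∀ t : ℝ, 0 ≤ t →
      0 ≤ ((∑ i, ν i * Real.exp ((ρ - σ i) * t)) + N * γ * Real.exp (ρ * t))
        - Real.exp (ρ * t) * (ρ * V t + V' t) := by
    intro t ht
    have h1 := hineq t ht
    have hep : (0:ℝ) < Real.exp (ρ * t) := Real.exp_pos _
    have h2 : Real.exp (ρ * t) * (ρ * V t + V' t)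
        ≤ Real.exp (ρ * t) * ((∑ i, ν i * Real.exp (-(σ i) * t)) + N * γ) := by
      apply mul_le_mul_of_nonneg_left _ hep.le
      linarith
    have h3 : Real.exp (ρ * t) * ((∑ i, ν i * Real.exp (-(σ i) * t)) + N * γ)
        = (∑ i, ν i * Real.exp ((ρ - σ i) * t)) + N * γ * Real.exp (ρ * t) := by
      rw [mul_add, Finset.mul_sum]
      congr 1
      · refine Finset.sum_congr rfl fun i _ => ?_
        rw [← mul_assoc, mul_comm (Real.exp (ρ * t)) (ν i), mul_assoc,
          ← Real.exp_add]
        ring_nf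
      · ring
    linarith [h3 ▸ h2]
  -- h is monotone on Ici 0
  have hmono : MonotoneOn h (Set.Ici (0:ℝ)) := by
    apply monotoneOn_of_hasDerivWithinAt_nonneg (convex_Ici 0)
      (f' := fun t => ((∑ i, ν i * Real.exp ((ρ - σ i) * t)) + N * γ * Real.exp (ρ * t))
        - Real.exp (ρ * t) * (ρ * V t + V' t))
    · intro t ht
      exact ((hhd t ht).continuousAt).continuousWithinAt
    · intro t ht
      rw [interior_Ici] at ht
      exact ((hhd t (le_of_lt ht)).hasDerivWithinAt)
    · intro t ht
      rw [interior_Ici] at ht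
      exact hh0 t (le_of_lt ht)
  have hWF : ∀ t : ℝ, 0 ≤ t → Real.exp (ρ * t) * V t ≤ F t := by
    intro t ht
    have := hmono (Set.self_mem_Ici) ht ht
    have hh0' : h 0 = 0 := by
      simp [hhdef, hFdef]
    rw [hh0'] at this
    simp only [hhdef] at this
    linarith
  -- V t ≤ B t
  have hVB : ∀ t : ℝ, 0 ≤ t → V t ≤ B t := by
    intro t ht
    have hep : (0:ℝ) < Real.exp (ρ * t) := Real.exp_pos _
    have hC : 0 ≤ (∑ i, ν i / (ρ - σ i)) + N * γ / ρ := by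
      have h1 : 0 ≤ ∑ i, ν i / (ρ - σ i) :=
        Finset.sum_nonneg fun i _ => le_of_lt (div_pos (hν i) (hρσ i))
      have h2 : 0 ≤ (N:ℝ) * γ / ρ := by positivity
      linarith
    have hsc : ∀ i : Fin N, Real.exp (ρ * t) * (ν i / (ρ - σ i) * Real.exp (-(σ i) * t))
        = ν i / (ρ - σ i) * Real.exp ((ρ - σ i) * t) := by
      intro i
      rw [← mul_assoc, mul_comm (Real.exp (ρ * t)) _, mul_assoc, ← Real.exp_add]
      ring_nf
    have hkey : Real.exp (ρ * t) * B t = F t + ((∑ i, ν i / (ρ - σ i)) + N * γ / ρ) := by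
      simp only [hBdef, hFdef, mul_add, Finset.mul_sum]
      rw [Finset.sum_congr rfl fun i _ => hsc i]
      have hV0 : Real.exp (ρ * t) * (V 0 * Real.exp (-(ρ * t))) = V 0 := by
        rw [mul_comm (Real.exp (ρ * t)) _, mul_assoc, ← Real.exp_add]
        simp
      rw [hV0]
      rw [show (∑ i, ν i / (ρ - σ i) * (Real.exp ((ρ - σ i) * t) - 1))
          = (∑ i, ν i / (ρ - σ i) * Real.exp ((ρ - σ i) * t)) - ∑ i, ν i / (ρ - σ i) from by
        rw [← Finset.sum_sub_distrib]
        exact Finset.sum_congr rfl fun i _ => by ring]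
      ring
    have hFB : F t ≤ Real.exp (ρ * t) * B t := by
      rw [hkey]; linarith
    have := le_trans (hWF t ht) hFB
    exact le_of_mul_le_mul_left this hep
  constructor
  · -- uniform bound
    intro t ht
    refine le_trans (hVB t ht) ?_
    simp only [hBdef]
    have h1 : V 0 * Real.exp (-(ρ * t)) ≤ V 0 := by
      have := hnonneg 0 le_rfl
      have he1 : Real.exp (-(ρ * t)) ≤ 1 := by
        rw [Real.exp_le_one_iff]
        nlinarith
      nlinarith
    have h2 : (∑ i, ν i / (ρ - σ i) * Real.exp (-(σ i) * t)) ≤ ∑ i, ν i / (ρ - σ i) := by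
      apply Finset.sum_le_sum
      intro i _
      have he1 : Real.exp (-(σ i) * t) ≤ 1 := by
        rw [Real.exp_le_one_iff]
        nlinarith [(hσ i).1]
      have := le_of_lt (div_pos (hν i) (hρσ i))
      nlinarith
    linarith
  · -- limsup
    have hBtend : Tendsto B atTop (nhds ((N:ℝ) * γ / ρ)) := by
      have hterm : ∀ c : ℝ, 0 < c → Tendsto (fun t : ℝ => Real.exp (-(c * t))) atTop (nhds 0) := by
        intro c hc
        have h1 : Tendsto (fun t : ℝ => c * t) atTop atTop :=
          Tendsto.const_mul_atTop hc tendsto_id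
        exact Real.tendsto_exp_neg_atTop_nhds_zero.comp h1
      have h1 : Tendsto (fun t => V 0 * Real.exp (-(ρ * t))) atTop (nhds 0) := by
        have := (hterm ρ hρ).const_mul (V 0)
        simpa using this
      have h2 : Tendsto (fun t => ∑ i, ν i / (ρ - σ i) * Real.exp (-(σ i) * t)) atTop (nhds 0) := by
        have : Tendsto (fun t => ∑ i, ν i / (ρ - σ i) * Real.exp (-(σ i) * t)) atTop
            (nhds (∑ i : Fin N, (0:ℝ))) := by
          apply tendsto_finset_sum
          intro i _
          have hc := (hterm (σ i) (hσ i).1).const_mul (ν i / (ρ - σ i))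
          simp only [mul_zero] at hc
          convert hc using 2 with t
          rw [neg_mul]
        simpa using this
      have := (h1.add h2).add_const ((N:ℝ) * γ / ρ)
      simpa [hBdef] using this
    have hVleB : ∀ᶠ t in atTop, V t ≤ B t := by
      filter_upwards [eventually_ge_atTop (0:ℝ)] with t ht using hVB t ht
    have hVcb : IsCoboundedUnder (· ≤ ·) atTop V := by
      exact isCoboundedUnder_le_of_eventually_le atTop (x := 0)
        ((eventually_ge_atTop (0:ℝ)).mono fun t ht => hnonneg t ht)
    have hBbd : IsBoundedUnder (· ≤ ·) atTop B := hBtend.isBoundedUnder_le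
    calc limsup V atTop ≤ limsup B atTop := limsup_le_limsup hVleB hVcb hBbd
      _ = (N:ℝ) * γ / ρ := hBtend.limsup_eq
end

section
/- Suppose ‖s(t)‖ ≤ (M/a)(e^{a(t - t_k)} − 1) for all t in [t_k, t_{k+1}), and the left limit of ‖s‖ at t_{k+1} is at least c > 0. Then t_{k+1} − t_k ≥ (1/a)·ln(1 + a c / M), where a > 0 and M > 0. -/
open Filter

theorem stmt5 {n : ℕ} (tk tk1 : ℝ) (htk : tk < tk1)
    (s : ℝ → EuclideanSpace ℝ (Fin n))
    (a M c l : ℝ) (ha : 0 < a) (hM : 0 < M) (hc : 0 < c)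
    (hbound : ∀ t ∈ Set.Ico tk tk1, ‖s t‖ ≤ (M / a) * (Real.exp (a * (t - tk)) - 1))
    (hlim : Tendsto (fun t => ‖s t‖) (nhdsWithin tk1 (Set.Iio tk1)) (nhds l))
    (hcl : c ≤ l) :
    (1 / a) * Real.log (1 + a * c / M) ≤ tk1 - tk := by
  have hg : Tendsto (fun t => (M / a) * (Real.exp (a * (t - tk)) - 1))
      (nhdsWithin tk1 (Set.Iio tk1)) (nhds ((M / a) * (Real.exp (a * (tk1 - tk)) - 1))) := by
    apply Tendsto.mono_left _ nhdsWithin_le_nhds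
    exact (Continuous.tendsto (by continuity) tk1)
  have hev : ∀ᶠ t in nhdsWithin tk1 (Set.Iio tk1),
      ‖s t‖ ≤ (M / a) * (Real.exp (a * (t - tk)) - 1) := by
    filter_upwards [Ioo_mem_nhdsLT_of_mem ⟨htk, le_refl tk1⟩] with t ht
    exact hbound t ⟨le_of_lt ht.1, ht.2⟩
  have hne : (nhdsWithin tk1 (Set.Iio tk1)).NeBot := by
    exact nhdsLT_neBot tk1
  have hle : l ≤ (M / a) * (Real.exp (a * (tk1 - tk)) - 1) :=
    le_of_tendsto_of_tendsto hlim hg hev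
  have hcle : c ≤ (M / a) * (Real.exp (a * (tk1 - tk)) - 1) := hcl.trans hle
  -- rearrange: 1 + a*c/M ≤ exp (a*(tk1-tk))
  have key : 1 + a * c / M ≤ Real.exp (a * (tk1 - tk)) := by
    have h1 : a * c / M ≤ Real.exp (a * (tk1 - tk)) - 1 := by
      rw [div_le_iff₀ hM]
      have := mul_le_mul_of_nonneg_left hcle (le_of_lt ha)
      calc a * c ≤ a * ((M / a) * (Real.exp (a * (tk1 - tk)) - 1)) := this
        _ = (Real.exp (a * (tk1 - tk)) - 1) * M := by field_simp
    linarith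
  have hpos : 0 < 1 + a * c / M := by positivity
  have hlog := Real.log_le_log hpos key
  rw [Real.log_exp] at hlog
  rw [div_mul_eq_mul_div, one_mul, div_le_iff₀ ha] at *
  linarith [hlog]
end

section
/- Let A ∈ ℝ^{n×n}, B ∈ ℝ^{n×p}, λ̲ > 0, and let Y, Q, R be symmetric positive definite with YA + AᵀY − 2λ̲·YBR⁻¹BᵀY + Q ⪯ 0. Let λ ≥ λ̲ be a real number and K = −R⁻¹BᵀY. Then the matrix Y(A + λBK) + (A + λBK)ᵀY ⪯ −Q; in particular A + λBK is Hurwitz stable (all eigenvalues have negative real part). -/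
open Matrix
open scoped ComplexOrder

private lemma map_mul_ofReal {m k l : ℕ} (P : Matrix (Fin m) (Fin k) ℝ)
    (S : Matrix (Fin k) (Fin l) ℝ) :
    (P * S).map Complex.ofReal = P.map Complex.ofReal * S.map Complex.ofReal :=
  Matrix.map_mul (f := Complex.ofRealHom)

private lemma conjTranspose_map_ofReal {m k : ℕ} (P : Matrix (Fin m) (Fin k) ℝ) :
    (P.map Complex.ofReal)ᴴ = Pᵀ.map Complex.ofReal := by
  ext i j
  simp [Complex.conj_ofReal]

private lemma psd_map {m : ℕ} {M : Matrix (Fin m) (Fin m) ℝ} (hM : M.PosSemidef) :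
    (M.map Complex.ofReal).PosSemidef := by
  obtain ⟨C, hC⟩ : ∃ C : Matrix (Fin m) (Fin m) ℝ, M = Cᴴ * C := by
    open MatrixOrder in
    refine ⟨CFC.sqrt M, ?_⟩
    have h0 : 0 ≤ M := hM.nonneg
    rw [(CFC.sqrt_nonneg M).posSemidef.1.eq,
      CFC.sqrt_mul_sqrt_self M h0]
  have h : M.map Complex.ofReal = (C.map Complex.ofReal)ᴴ * (C.map Complex.ofReal) := by
    rw [hC, map_mul_ofReal, conjTranspose_map_ofReal,
      Matrix.conjTranspose_eq_transpose_of_trivial]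
  rw [h]
  exact Matrix.posSemidef_conjTranspose_mul_self _

private lemma pd_map {m : ℕ} {M : Matrix (Fin m) (Fin m) ℝ} (hM : M.PosDef) :
    (M.map Complex.ofReal).PosDef := by
  have hpsd := psd_map hM.posSemidef
  refine Matrix.posDef_iff_dotProduct_mulVec.mpr ⟨hpsd.1, fun v hv => ?_⟩
  have hdet : (M.map Complex.ofReal).det ≠ 0 := by
    have h := RingHom.map_det Complex.ofRealHom M
    rw [RingHom.mapMatrix_apply] at h
    have e : M.map Complex.ofReal = M.map (⇑Complex.ofRealHom) := rfl
    rw [e, ← h]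
    simpa using hM.det_pos.ne'
  have hne : (M.map Complex.ofReal) *ᵥ v ≠ 0 := by
    intro h
    apply hv
    have h2 := congrArg (fun w => (M.map Complex.ofReal)⁻¹ *ᵥ w) h
    simpa [Matrix.mulVec_mulVec,
      Matrix.nonsing_inv_mul _ (isUnit_iff_ne_zero.mpr hdet)] using h2
  have h0 : star v ⬝ᵥ (M.map Complex.ofReal) *ᵥ v ≠ 0 := by
    intro h
    exact hne ((hpsd.dotProduct_mulVec_zero_iff v).mp h)
  exact lt_of_le_of_ne (hpsd.dotProduct_mulVec_nonneg v) (Ne.symm h0)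

private lemma psd_smul {m : ℕ} {M : Matrix (Fin m) (Fin m) ℝ} (hM : M.PosSemidef)
    {c : ℝ} (hc : 0 ≤ c) : (c • M).PosSemidef := by
  refine Matrix.posSemidef_iff_dotProduct_mulVec.mpr ⟨?_, fun x => ?_⟩
  · have hsym : Mᵀ = M := by
      rw [← Matrix.conjTranspose_eq_transpose_of_trivial]; exact hM.1
    simp [Matrix.IsHermitian, Matrix.conjTranspose_smul,
      Matrix.conjTranspose_eq_transpose_of_trivial, hsym]
  · have := hM.dotProduct_mulVec_nonneg x
    simp only [Matrix.smul_mulVec, dotProduct_smul, smul_eq_mul]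
    exact mul_nonneg hc this

theorem stmt9 {n p : ℕ}
    (A : Matrix (Fin n) (Fin n) ℝ) (B : Matrix (Fin n) (Fin p) ℝ)
    (Y Q : Matrix (Fin n) (Fin n) ℝ) (R : Matrix (Fin p) (Fin p) ℝ)
    (hY : Y.PosDef) (hQ : Q.PosDef) (hR : R.PosDef)
    (lam0 lam : ℝ) (hlam0 : 0 < lam0) (hlam : lam0 ≤ lam)
    (hRic : (-(Y * A + Aᵀ * Y - (2 * lam0) • (Y * B * R⁻¹ * Bᵀ * Y) + Q)).PosSemidef)
    (K : Matrix (Fin p) (Fin n) ℝ) (hK : K = -(R⁻¹ * Bᵀ * Y)) :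
    ((-Q) - (Y * (A + lam • (B * K)) + (A + lam • (B * K))ᵀ * Y)).PosSemidef ∧
      (∀ μ ∈ spectrum ℂ ((A + lam • (B * K)).map Complex.ofReal), μ.re < 0) := by
  have hYsymm : Yᵀ = Y := by
    rw [← Matrix.conjTranspose_eq_transpose_of_trivial]; exact hY.1
  have hRsymm : Rᵀ = R := by
    rw [← Matrix.conjTranspose_eq_transpose_of_trivial]; exact hR.1
  have hRinv : (R⁻¹)ᵀ = R⁻¹ := by rw [Matrix.transpose_nonsing_inv, hRsymm]
  set Mm : Matrix (Fin n) (Fin n) ℝ := Y * B * R⁻¹ * Bᵀ * Y with hMm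
  have hMeq : Mm = (Bᵀ * Y)ᴴ * R⁻¹ * (Bᵀ * Y) := by
    rw [Matrix.conjTranspose_eq_transpose_of_trivial]
    simp [hMm, Matrix.transpose_mul, hYsymm, Matrix.mul_assoc]
  have hMpsd : Mm.PosSemidef := by
    rw [hMeq]
    exact hR.inv.posSemidef.conjTranspose_mul_mul_same _
  set F : Matrix (Fin n) (Fin n) ℝ := A + lam • (B * K) with hF
  have hL : Y * F + Fᵀ * Y = Y * A + Aᵀ * Y - (2 * lam) • Mm := by
    subst hK
    simp only [hF, hMm, Matrix.mul_add, Matrix.add_mul, Matrix.mul_smul,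
      Matrix.smul_mul, Matrix.mul_neg, Matrix.neg_mul, Matrix.transpose_add,
      Matrix.transpose_smul, Matrix.transpose_mul, Matrix.transpose_neg,
      hYsymm, hRinv, Matrix.transpose_transpose, Matrix.mul_assoc]
    module
  have hS : (-Q) - (Y * F + Fᵀ * Y)
      = (-(Y * A + Aᵀ * Y - (2 * lam0) • Mm + Q)) + (2 * (lam - lam0)) • Mm := by
    rw [hL]; module
  have hSpsd : ((-Q) - (Y * F + Fᵀ * Y)).PosSemidef := by
    rw [hS]
    exact hRic.add (psd_smul hMpsd (by nlinarith))
  refine ⟨hSpsd, ?_⟩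
  intro μ hμ
  rw [← AlgEquiv.spectrum_eq (Matrix.toLinAlgEquiv (Pi.basisFun ℂ (Fin n))),
    ← Module.End.hasEigenvalue_iff_mem_spectrum] at hμ
  obtain ⟨v, hv⟩ := hμ.exists_hasEigenvector
  have hv0 := hv.right
  have hmv : (F.map Complex.ofReal) *ᵥ v = μ • v := by
    have h1 := hv.apply_eq_smul
    rw [Matrix.toLinAlgEquiv_apply] at h1
    funext i
    have h2 := congrFun h1 i
    simpa [(funext fun i => Pi.basisFun_repr (x := v) (i := i) : ⇑((Pi.basisFun ℂ (Fin n)).repr v) = v), Pi.basisFun_repr, Pi.basisFun_apply, Finset.sum_apply, Pi.single_apply,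
      mul_ite, Finset.sum_ite_eq, Finset.sum_ite_eq'] using h2
  set Yc := Y.map Complex.ofReal with hYc
  set Fc := F.map Complex.ofReal with hFc
  set Qc := Q.map Complex.ofReal with hQc
  have hFcT : Fcᵀ = Fcᴴ := by
    rw [conjTranspose_map_ofReal, hFc]
    ext i j; simp
  set yv : ℂ := star v ⬝ᵥ Yc *ᵥ v with hyv
  have e1 : star v ⬝ᵥ (Yc * Fc) *ᵥ v = μ * yv := by
    rw [← Matrix.mulVec_mulVec, hmv, Matrix.mulVec_smul, dotProduct_smul,
      smul_eq_mul, hyv]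
  have e2 : star v ⬝ᵥ (Fcᵀ * Yc) *ᵥ v = (starRingEnd ℂ) μ * yv := by
    rw [hFcT, ← Matrix.mulVec_mulVec, Matrix.dotProduct_mulVec, ← Matrix.star_mulVec,
      hmv]
    simp [smul_dotProduct, Matrix.smul_vecMul, smul_eq_mul, hyv,
      Matrix.dotProduct_mulVec]
  -- complexified S
  have hScPsd : (((-Q) - (Y * F + Fᵀ * Y)).map Complex.ofReal).PosSemidef := psd_map hSpsd
  have hScEq : ((-Q) - (Y * F + Fᵀ * Y)).map Complex.ofReal
      = -Qc - (Yc * Fc + Fcᵀ * Yc) := by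
    rw [hQc, hYc, hFc]
    ext i j
    simp [Matrix.sub_apply, Matrix.add_apply, Matrix.neg_apply, Matrix.mul_apply,
      Matrix.transpose_apply, Matrix.map_apply]
  have h0 : (0:ℝ) ≤ (star v ⬝ᵥ (-Qc - (Yc * Fc + Fcᵀ * Yc)) *ᵥ v).re := by
    rw [← hScEq]
    exact hScPsd.re_dotProduct_nonneg v
  have hsplit : star v ⬝ᵥ (-Qc - (Yc * Fc + Fcᵀ * Yc)) *ᵥ v
      = -(star v ⬝ᵥ Qc *ᵥ v) - (μ * yv + (starRingEnd ℂ) μ * yv) := by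
    rw [← e1, ← e2]
    simp [Matrix.sub_mulVec, Matrix.add_mulVec, Matrix.neg_mulVec,
      dotProduct_sub, dotProduct_add, dotProduct_neg]
  have hqr : (0:ℝ) < (star v ⬝ᵥ Qc *ᵥ v).re := by
    have := (pd_map hQ).re_dotProduct_pos hv0
    simpa [hQc] using this
  have hyr : (0:ℝ) < yv.re := by
    have := (pd_map hY).re_dotProduct_pos hv0
    simpa [hyv, hYc] using this
  have hyim : yv.im = 0 := by
    have h := (pd_map hY).posSemidef.dotProduct_mulVec_nonneg v
    rw [Complex.le_def] at h
    exact (h.2).symm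
  rw [hsplit] at h0
  have hre : (μ * yv + (starRingEnd ℂ) μ * yv).re = 2 * μ.re * yv.re := by
    simp [Complex.add_re, Complex.mul_re, Complex.conj_re, Complex.conj_im, hyim]
    ring
  simp only [Complex.sub_re, Complex.neg_re, hre] at h0
  nlinarith
end
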